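/- Let f, g : ℝⁿ → ℝ be twice continuously differentiable, let Q ⊆ ℝⁿ, and let 0 ≤ i, j ≤ n be integers with i + j ≥ n. If f is non-convex of grade i on Q and g is non-convex of grade j on Q, then the sum f + g is non-convex of grade i + j − n on Q. -/

import Mathlib

open scoped RealInnerProductSpace
open Real Set

/-- `f` is non-convex of grade `τ` on `Q`: at every `x ∈ Q` there is a linear subspace `V`
of dimension at least `τ` on which the Hessian quadratic form of `f` at `x` is nonnegative. -/
def NonconvexOfGrade {n : ℕ} (f : EuclideanSpace ℝ (Fin n) → ℝ)
    (Q : Set (EuclideanSpace ℝ (Fin n))) (τ : ℕ) : Prop :=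
  ∀ x ∈ Q, ∃ V : Submodule ℝ (EuclideanSpace ℝ (Fin n)),
    τ ≤ Module.finrank ℝ V ∧ ∀ h ∈ V, 0 ≤ iteratedFDeriv ℝ 2 f x ![h, h]

/-- Grading rule for sums: if `f` is non-convex of grade `i` and `g` of grade `j`,
with `i + j ≥ n`, then `f + g` is non-convex of grade `i + j - n`. -/
theorem sum_nonconvexOfGrade {n : ℕ} (hn : 1 ≤ n)
    (f g : EuclideanSpace ℝ (Fin n) → ℝ)
    (hf : ContDiff ℝ 2 f) (hg : ContDiff ℝ 2 g)
    (Q : Set (EuclideanSpace ℝ (Fin n)))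
    (i j : ℕ) (hi : i ≤ n) (hj : j ≤ n) (hij : n ≤ i + j)
    (hfg : NonconvexOfGrade f Q i) (hgg : NonconvexOfGrade g Q j) :
    NonconvexOfGrade (fun x => f x + g x) Q (i + j - n) := by
  intro x hx
  obtain ⟨V, hV, hVf⟩ := hfg x hx
  obtain ⟨W, hW, hWg⟩ := hgg x hx
  refine ⟨V ⊓ W, ?_, ?_⟩
  · have key := Submodule.finrank_sup_add_finrank_inf_eq V W
    have h1 : Module.finrank ℝ ↥(V ⊔ W) ≤ n := by
      simpa using Submodule.finrank_le (V ⊔ W)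
    omega
  · intro h hh
    have hadd := iteratedFDeriv_add_apply (i := 2) hf.contDiffAt hg.contDiffAt (x := x)
    have : iteratedFDeriv ℝ 2 (fun x => f x + g x) x ![h, h]
        = iteratedFDeriv ℝ 2 f x ![h, h] + iteratedFDeriv ℝ 2 g x ![h, h] := by
      exact congrFun (congrArg DFunLike.coe hadd) ![h, h]
    rw [this]
    exact add_nonneg (hVf h hh.1) (hWg h hh.2)
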